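/- There exists a constant C_Γ > 0, depending only on the Schottky data, such that for every word 𝐚 = a_1…a_n ∈ W° and all x, y ∈ I_{a_n}: (i) C_Γ^{-1} |I_𝐚| ≤ γ'_{𝐚'}(x) ≤ C_Γ |I_𝐚|; (ii) γ'_{𝐚'}(x)/γ'_{𝐚'}(y) ≤ exp(C_Γ |x − y|); and (iii) for every Borel set I' ⊂ I_{a_n}, denoting Lebesgue measure by |·|, C_Γ^{-1} |I_𝐚| · |I'| ≤ |γ_{𝐚'}(I')| ≤ C_Γ |I_𝐚| · |I'|. -/

import Mathlib

open MeasureTheory Set Real Pointwise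

noncomputable section

abbrev SL2 := Matrix.SpecialLinearGroup (Fin 2) ℝ

/-- The Möbius transformation of `ℝ` associated to `g ∈ SL(2,ℝ)` (junk value at the pole). -/
def mobius (g : SL2) (x : ℝ) : ℝ :=
  (g 0 0 * x + g 0 1) / (g 1 0 * x + g 1 1)

/-- The derivative `γ'(x) = (cx+d)⁻²` of the Möbius transformation. -/
def mobiusDeriv (g : SL2) (x : ℝ) : ℝ :=
  ((g 1 0 * x + g 1 1) ^ 2)⁻¹

/-- The derivative of the Möbius transformation in the ball model,
`|γ'(x)|_B = ((1+x²)/(1+γ(x)²)) γ'(x)`. -/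
def mobiusDerivB (g : SL2) (x : ℝ) : ℝ :=
  ((1 + x ^ 2) / (1 + mobius g x ^ 2)) * mobiusDeriv g x

/-- The Möbius action of `SL(2,ℝ)` on `ℝ ∪ {∞}`. -/
def mobiusOP (g : SL2) (x : OnePoint ℝ) : OnePoint ℝ :=
  Option.elim x
    (if g 1 0 = 0 then OnePoint.infty else ((g 0 0 / g 1 0 : ℝ) : OnePoint ℝ))
    (fun y => if g 1 0 * y + g 1 1 = 0 then OnePoint.infty
      else ((mobius g y : ℝ) : OnePoint ℝ))

/-- The pole `γ⁻¹(∞) = -d/c` of `γ = [[a,b],[c,d]]`. -/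
def mobiusPole (g : SL2) : ℝ := -(g 1 1) / (g 1 0)

/-- The distortion factor `α(γ, [x₀,x₁]) = log((γ⁻¹(∞) − x₁)/(γ⁻¹(∞) − x₀))`,
with the convention `α = 0` when `γ⁻¹(∞) = ∞` (i.e. `c = 0`). -/
def alphaDist (g : SL2) (x₀ x₁ : ℝ) : ℝ :=
  if g 1 0 = 0 then 0 else Real.log ((mobiusPole g - x₁) / (mobiusPole g - x₀))

/-- The letter `ā` paired with `a` in the alphabet `{1,…,2r}` (modelled by `Fin (2r)`). -/
def bar {r : ℕ} (a : Fin (2 * r)) : Fin (2 * r) :=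
  if h : (a : ℕ) < r then ⟨(a : ℕ) + r, by omega⟩
  else ⟨(a : ℕ) - r, by have := a.isLt; omega⟩

/-- Schottky data: `2r` disjoint compact intervals `I_a = [ξ₀ a, ξ₁ a]` on the real line and
transformations `γ_a ∈ SL(2,ℝ)` with `γ_ā = γ_a⁻¹` such that `γ_a` maps the complement (in
`ℝ ∪ {∞}`) of the interior of `I_ā` onto `I_a`. -/
structure SchottkyData (r : ℕ) where
  hr : 2 ≤ r
  ξ₀ : Fin (2 * r) → ℝ
  ξ₁ : Fin (2 * r) → ℝ
  hlt : ∀ a, ξ₀ a < ξ₁ a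
  hdisj : ∀ a b, a ≠ b → Disjoint (Icc (ξ₀ a) (ξ₁ a)) (Icc (ξ₀ b) (ξ₁ b))
  γ : Fin (2 * r) → SL2
  hinv : ∀ a, γ (bar a) = (γ a)⁻¹
  hmap : ∀ a, mobiusOP (γ a) ''
      (univ \ ((fun t : ℝ => (t : OnePoint ℝ)) '' Ioo (ξ₀ (bar a)) (ξ₁ (bar a))))
      = (fun t : ℝ => (t : OnePoint ℝ)) '' Icc (ξ₀ a) (ξ₁ a)

namespace SchottkyData

variable {r : ℕ}

/-- `l` is a word: no letter is followed by its bar. -/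
def IsWord (_ : SchottkyData r) (l : List (Fin (2 * r))) : Prop :=
  l.Chain' fun p q => q ≠ bar p

/-- The group element `γ_𝐚 = γ_{a_1} ⋯ γ_{a_n}` of a word. -/
def wordγ (S : SchottkyData r) (l : List (Fin (2 * r))) : SL2 :=
  (l.map S.γ).prod

/-- The interval `I_𝐚 = γ_{𝐚'}(I_{a_n})` of a nonempty word (and `∅` for the empty word). -/
def wordI (S : SchottkyData r) (l : List (Fin (2 * r))) : Set ℝ :=
  if h : l = [] then ∅
  else mobius (S.wordγ l.dropLast) '' Icc (S.ξ₀ (l.getLast h)) (S.ξ₁ (l.getLast h))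

/-- The limit set `Λ_Γ = ⋂_n ⋃_{𝐚 ∈ W_n} I_𝐚`. -/
def limitSet (S : SchottkyData r) : Set ℝ :=
  ⋂ n : ℕ, ⋃ (l : List (Fin (2 * r))) (_ : S.IsWord l ∧ l.length = n + 1), S.wordI l

/-- `μ` is the (δ-conformal) Patterson–Sullivan measure: a Borel probability measure
supported on the limit set satisfying the equivariance property under the group
generated by the Schottky transformations. -/
def IsPS (S : SchottkyData r) (δ : ℝ) (μ : Measure ℝ) : Prop :=
  IsProbabilityMeasure μ ∧ μ S.limitSetᶜ = 0 ∧
    ∀ g ∈ Subgroup.closure (Set.range S.γ), ∀ f : ℝ → ℝ, Measurable f →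
      (∃ C, ∀ x, |f x| ≤ C) →
      ∫ x, f x ∂μ = ∫ x, f (mobius g x) * mobiusDerivB g x ^ δ ∂μ

/-- The partition `Z(τ) = {𝐚 ∈ W° : |I_𝐚| ≤ τ < |I_{𝐚'}|}` (with `|I_∅| = ∞`). -/
def Zpart (S : SchottkyData r) (τ : ℝ) : Set (List (Fin (2 * r))) :=
  {l | S.IsWord l ∧ l ≠ [] ∧ (MeasureTheory.volume (S.wordI l)).toReal ≤ τ ∧
    (l.dropLast = [] ∨ τ < (MeasureTheory.volume (S.wordI l.dropLast)).toReal)}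

end SchottkyData

/-- The length `|I|` of an interval `I ⊂ ℝ`. -/
def ivlen (I : Set ℝ) : ℝ := (MeasureTheory.volume I).toReal

/-- `𝐚 ⇝ 𝐛` : the last letter of `𝐚` equals the first letter of `𝐛`. -/
def chn {X : Type*} (l m : List X) : Prop :=
  ∃ (h1 : l ≠ []) (h2 : m ≠ []), l.getLast h1 = m.head h2

/-- The center of an interval. -/
def ctr (I : Set ℝ) : ℝ := (sInf I + sSup I) / 2

end

noncomputable section

open MeasureTheory Set Real

/-! ### Auxiliary machinery for the distortion estimates -/

section Aux

/-- The denominator `cx+d` of the Möbius transformation. -/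
def ud (g : SL2) (x : ℝ) : ℝ := g 1 0 * x + g 1 1

lemma SL2_det (g : SL2) : g 0 0 * g 1 1 - g 0 1 * g 1 0 = 1 := by
  have := g.2
  rw [Matrix.det_fin_two] at this
  exact this

lemma SL2_mul (g h : SL2) (i j : Fin 2) :
    (g * h) i j = g i 0 * h 0 j + g i 1 * h 1 j := by
  simp [Matrix.SpecialLinearGroup.coe_mul, Matrix.mul_apply, Fin.sum_univ_two]

lemma ud_one (x : ℝ) : ud 1 x = 1 := by
  simp [ud, Matrix.SpecialLinearGroup.coe_one]

lemma ud_mul (g h : SL2) (x : ℝ) (hh : ud h x ≠ 0) :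
    ud (g * h) x = ud g (mobius h x) * ud h x := by
  simp only [ud, mobius, SL2_mul] at *
  field_simp
  ring

lemma mobius_one (x : ℝ) : mobius 1 x = x := by
  simp [mobius, Matrix.SpecialLinearGroup.coe_one]

lemma mobius_mul (g h : SL2) (x : ℝ) (hh : ud h x ≠ 0)
    (hg : ud g (mobius h x) ≠ 0) :
    mobius (g * h) x = mobius g (mobius h x) := by
  have h2 : ud (g * h) x ≠ 0 := by
    rw [ud_mul g h x hh]; exact mul_ne_zero hg hh
  simp only [ud, SL2_mul, mobius] at h2 hg hh ⊢
  rw [div_eq_div_iff h2 hg]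
  field_simp
  ring

lemma mobius_sub (g : SL2) (x y : ℝ) (hx : ud g x ≠ 0) (hy : ud g y ≠ 0) :
    mobius g y - mobius g x = (y - x) / (ud g x * ud g y) := by
  have hd := SL2_det g
  simp only [ud] at *
  simp only [mobius]
  rw [div_sub_div _ _ hy hx, div_eq_div_iff (mul_ne_zero hy hx) (mul_ne_zero hx hy)]
  ring_nf
  linear_combination (y*x*(g 1 0)^2 + y*(g 1 0)*(g 1 1) + x*(g 1 0)*(g 1 1) + (g 1 1)^2) * (y - x) * hd

lemma mobiusDeriv_eq (g : SL2) (x : ℝ) : mobiusDeriv g x = ((ud g x) ^ 2)⁻¹ := rfl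

lemma mobius_hasDerivAt (g : SL2) (x : ℝ) (hx : ud g x ≠ 0) :
    HasDerivAt (mobius g) (mobiusDeriv g x) x := by
  have hd := SL2_det g
  have h1 : HasDerivAt (fun y : ℝ => g 0 0 * y + g 0 1) (g 0 0) x := by
    simpa using ((hasDerivAt_id x).const_mul (g 0 0)).add_const (g 0 1)
  have h2 : HasDerivAt (fun y : ℝ => g 1 0 * y + g 1 1) (g 1 0) x := by
    simpa using ((hasDerivAt_id x).const_mul (g 1 0)).add_const (g 1 1)
  simp only [ud] at hx
  have h3 := h1.div h2 hx
  have hnum : g 0 0 * (g 1 0 * x + g 1 1) - (g 0 0 * x + g 0 1) * g 1 0 = 1 := by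
    linear_combination hd
  have e : mobiusDeriv g x = (g 0 0 * (g 1 0 * x + g 1 1) - (g 0 0 * x + g 0 1) * g 1 0) /
      (g 1 0 * x + g 1 1) ^ 2 := by
    rw [hnum, mobiusDeriv, one_div]
  rw [e]; exact h3

lemma mobiusOP_coe (g : SL2) (x : ℝ) : mobiusOP g (x : OnePoint ℝ) =
    if g 1 0 * x + g 1 1 = 0 then OnePoint.infty else ((mobius g x : ℝ) : OnePoint ℝ) := rfl

namespace SchottkyData

variable {r : ℕ} (S : SchottkyData r)

/-- The interval `I_a`. -/
def Ic (a : Fin (2 * r)) : Set ℝ := Icc (S.ξ₀ a) (S.ξ₁ a)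

lemma letter_lemma (a : Fin (2 * r)) (x : ℝ)
    (hx : x ∉ Ioo (S.ξ₀ (bar a)) (S.ξ₁ (bar a))) :
    ud (S.γ a) x ≠ 0 ∧ mobius (S.γ a) x ∈ S.Ic a := by
  have hmem : (x : OnePoint ℝ) ∈
      univ \ ((fun t : ℝ => (t : OnePoint ℝ)) '' Ioo (S.ξ₀ (bar a)) (S.ξ₁ (bar a))) := by
    refine ⟨mem_univ _, ?_⟩
    rintro ⟨u, hu, hue⟩
    exact hx (OnePoint.coe_injective hue ▸ hu)
  have h2 : mobiusOP (S.γ a) (x : OnePoint ℝ) ∈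
      (fun t : ℝ => (t : OnePoint ℝ)) '' Icc (S.ξ₀ a) (S.ξ₁ a) := by
    rw [← S.hmap a]; exact mem_image_of_mem _ hmem
  obtain ⟨y, hy, hye⟩ := h2
  rw [mobiusOP_coe] at hye
  by_cases hud : (S.γ a) 1 0 * x + (S.γ a) 1 1 = 0
  · rw [if_pos hud] at hye
    exact absurd hye (OnePoint.coe_ne_infty y)
  · rw [if_neg hud] at hye
    exact ⟨hud, OnePoint.coe_injective hye ▸ hy⟩

lemma Ic_disjoint {a b : Fin (2 * r)} (hab : a ≠ b) {x : ℝ} (hx : x ∈ S.Ic a) :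
    x ∉ Ioo (S.ξ₀ b) (S.ξ₁ b) := by
  intro hxb
  exact Set.disjoint_left.mp (S.hdisj a b hab) hx (Ioo_subset_Icc_self hxb)

/-- The key inductive lemma: `γ_𝐚` is finite on the complement of the interior of
`I_{\bar a_n}` and maps it into `I_{a_1}`. -/
lemma outside : ∀ (l : List (Fin (2 * r))) (hl : l ≠ []), S.IsWord l → ∀ x : ℝ,
    x ∉ Ioo (S.ξ₀ (bar (l.getLast hl))) (S.ξ₁ (bar (l.getLast hl))) →
    ud (S.wordγ l) x ≠ 0 ∧ mobius (S.wordγ l) x ∈ S.Ic (l.head hl) := by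
  intro l
  induction l with
  | nil => intro hl; exact absurd rfl hl
  | cons a t ih =>
    intro hl hw x hx
    rcases eq_or_ne t [] with rfl | ht
    · have hγ : S.wordγ [a] = S.γ a := by simp [SchottkyData.wordγ]
      simp only [List.getLast_singleton] at hx
      have := S.letter_lemma a x hx
      simpa [hγ] using this
    · have hlast : (a :: t).getLast hl = t.getLast ht := List.getLast_cons ht
      have hw' : S.IsWord t := (List.isChain_cons.mp hw).2
      have hrel : t.head ht ≠ bar a := by
        have := (List.isChain_cons.mp hw).1
        exact this (t.head ht) (by simp [List.head?_eq_head ht])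
      have hih := ih ht hw' x (by rwa [hlast] at hx)
      obtain ⟨hu, hm⟩ := hih
      set y := mobius (S.wordγ t) x with hy
      have hyout : y ∉ Ioo (S.ξ₀ (bar a)) (S.ξ₁ (bar a)) := S.Ic_disjoint hrel hm
      obtain ⟨hu2, hm2⟩ := S.letter_lemma a y hyout
      have hγ : S.wordγ (a :: t) = S.γ a * S.wordγ t := by
        simp [SchottkyData.wordγ]
      constructor
      · rw [hγ, ud_mul _ _ _ hu]
        exact mul_ne_zero hu2 hu
      · rw [hγ, mobius_mul _ _ _ hu hu2]
        simpa using hm2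

end SchottkyData

end Aux
section Aux2

lemma getLast_rel' {α : Type*} {R : α → α → Prop} (l : List α) (hl : l ≠ [])
    (hd : l.dropLast ≠ []) (hw : List.Chain' R l) :
    R (l.dropLast.getLast hd) (l.getLast hl) := by
  have hw2 : List.Chain' R (l.dropLast ++ [l.getLast hl]) := by
    rw [List.dropLast_append_getLast hl]; exact hw
  replace hw2 := List.isChain_append.mp hw2
  exact hw2.2.2 _ (by rw [List.getLast?_eq_getLast hd]; rfl) _ rfl

namespace SchottkyData

variable {r : ℕ} (S : SchottkyData r)

def elt0 : Fin (2 * r) := ⟨0, by have := S.hr; omega⟩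
def elt1 : Fin (2 * r) := ⟨1, by have := S.hr; omega⟩

def mlen : ℝ := Finset.univ.inf' ⟨S.elt0, Finset.mem_univ _⟩ (fun a => S.ξ₁ a - S.ξ₀ a)
def Dlen : ℝ := Finset.univ.sup' ⟨S.elt0, Finset.mem_univ _⟩ (fun a => S.ξ₁ a - S.ξ₀ a)

lemma mlen_pos : 0 < S.mlen := by
  rw [mlen]; exact (Finset.lt_inf'_iff (H := ⟨S.elt0, Finset.mem_univ _⟩)).mpr (fun a _ => by linarith [S.hlt a])

lemma mlen_le (a : Fin (2 * r)) : S.mlen ≤ S.ξ₁ a - S.ξ₀ a :=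
  Finset.inf'_le _ (Finset.mem_univ a)

lemma le_Dlen (a : Fin (2 * r)) : S.ξ₁ a - S.ξ₀ a ≤ S.Dlen := by
  exact Finset.le_sup' (fun a => S.ξ₁ a - S.ξ₀ a) (Finset.mem_univ a)

lemma mlen_le_Dlen : S.mlen ≤ S.Dlen := le_trans (S.mlen_le S.elt0) (S.le_Dlen S.elt0)

lemma offD_ne (T : SchottkyData r) :
    (Finset.univ.offDiag : Finset (Fin (2 * r) × Fin (2 * r))).Nonempty := by
  refine ⟨(T.elt0, T.elt1), ?_⟩
  rw [Finset.mem_offDiag]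
  refine ⟨Finset.mem_univ _, Finset.mem_univ _, ?_⟩
  simp [elt0, elt1, Fin.ext_iff]

def δ₀ : ℝ := (Finset.univ.offDiag : Finset (Fin (2 * r) × Fin (2 * r))).inf' S.offD_ne
  (fun p => max (S.ξ₀ p.2 - S.ξ₁ p.1) (S.ξ₀ p.1 - S.ξ₁ p.2))

lemma disj_cases {a b : Fin (2 * r)} (hab : a ≠ b) :
    S.ξ₁ a < S.ξ₀ b ∨ S.ξ₁ b < S.ξ₀ a := by
  by_contra h
  push_neg at h
  obtain ⟨h1, h2⟩ := h
  have hz : max (S.ξ₀ a) (S.ξ₀ b) ∈ Icc (S.ξ₀ a) (S.ξ₁ a) ∩ Icc (S.ξ₀ b) (S.ξ₁ b) := by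
    constructor
    · exact ⟨le_max_left _ _, max_le (S.hlt a).le h1⟩
    · exact ⟨le_max_right _ _, max_le h2 (S.hlt b).le⟩
  exact Set.disjoint_left.mp (S.hdisj a b hab) hz.1 hz.2

lemma δ₀_pos : 0 < S.δ₀ := by
  rw [δ₀, Finset.lt_inf'_iff]
  rintro ⟨a, b⟩ hab
  rw [Finset.mem_offDiag] at hab
  rcases S.disj_cases hab.2.2 with h | h
  · exact lt_max_of_lt_left (by linarith)
  · exact lt_max_of_lt_right (by linarith)

lemma sep {a b : Fin (2 * r)} (hab : a ≠ b) {y p : ℝ}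
    (hy : y ∈ S.Ic a) (hp : p ∈ S.Ic b) : S.δ₀ ≤ |y - p| := by
  have h1 : S.δ₀ ≤ max (S.ξ₀ b - S.ξ₁ a) (S.ξ₀ a - S.ξ₁ b) := by
    rw [δ₀]
    exact Finset.inf'_le _ (show (a, b) ∈ _ by
      rw [Finset.mem_offDiag]; exact ⟨Finset.mem_univ _, Finset.mem_univ _, hab⟩)
  obtain ⟨hy1, hy2⟩ := hy
  obtain ⟨hp1, hp2⟩ := hp
  have ha := S.hlt a
  have hb := S.hlt b
  rcases S.disj_cases hab with h | h
  · rw [abs_sub_comm, abs_of_nonneg (by linarith)]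
    exact le_trans h1 (max_le (by linarith) (by linarith))
  · rw [abs_of_nonneg (by linarith)]
    exact le_trans h1 (max_le (by linarith) (by linarith))

lemma wordγ_nil : S.wordγ [] = 1 := by simp [SchottkyData.wordγ]

lemma ud_ne {l : List (Fin (2 * r))} (hl : l ≠ []) (hw : S.IsWord l) :
    ∀ x ∈ S.Ic (l.getLast hl), ud (S.wordγ l.dropLast) x ≠ 0 := by
  intro x hx
  rcases eq_or_ne l.dropLast [] with hd | hd
  · rw [hd, S.wordγ_nil, ud_one]; exact one_ne_zero
  · have hw' : S.IsWord l.dropLast := List.IsChain.dropLast hw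
    have hrel : l.getLast hl ≠ bar (l.dropLast.getLast hd) := getLast_rel' l hl hd hw
    exact (S.outside l.dropLast hd hw' x (S.Ic_disjoint hrel hx)).1

lemma ud_ratio {l : List (Fin (2 * r))} (hl : l ≠ []) (hw : S.IsWord l) :
    ∀ x ∈ S.Ic (l.getLast hl), ∀ y ∈ S.Ic (l.getLast hl),
    |ud (S.wordγ l.dropLast) x| * S.δ₀ ≤ |ud (S.wordγ l.dropLast) y| * (S.δ₀ + |x - y|) := by
  intro x hx y hy
  have hδ := S.δ₀_pos
  by_cases hc : (S.wordγ l.dropLast) 1 0 = 0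
  · have hux : ud (S.wordγ l.dropLast) x = (S.wordγ l.dropLast) 1 1 := by simp [ud, hc]
    have huy : ud (S.wordγ l.dropLast) y = (S.wordγ l.dropLast) 1 1 := by simp [ud, hc]
    rw [hux, huy]
    have h0 : (0:ℝ) ≤ |(S.wordγ l.dropLast) 1 1| := abs_nonneg _
    nlinarith [abs_nonneg (x - y)]
  · have hd : l.dropLast ≠ [] := by
      intro h0
      apply hc
      rw [h0, S.wordγ_nil]
      simp [Matrix.SpecialLinearGroup.coe_one, Matrix.one_apply]
    have hw' : S.IsWord l.dropLast := List.IsChain.dropLast hw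
    set g := S.wordγ l.dropLast with hg
    set p : ℝ := -(g 1 1) / (g 1 0) with hp
    have hup : ud g p = 0 := by
      rw [ud, hp]; field_simp; ring
    have hpm : p ∈ Ioo (S.ξ₀ (bar (l.dropLast.getLast hd))) (S.ξ₁ (bar (l.dropLast.getLast hd))) := by
      by_contra hpo
      exact (S.outside l.dropLast hd hw' p hpo).1 hup
    have hrel : l.getLast hl ≠ bar (l.dropLast.getLast hd) := getLast_rel' l hl hd hw
    have hsep : S.δ₀ ≤ |y - p| := S.sep hrel hy (Ioo_subset_Icc_self hpm)
    have hux : ud g x = g 1 0 * (x - p) := by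
      rw [ud, hp]; field_simp; ring
    have huy : ud g y = g 1 0 * (y - p) := by
      rw [ud, hp]; field_simp; ring
    rw [hux, huy, abs_mul, abs_mul]
    have htri : |x - p| ≤ |y - p| + |x - y| := by
      calc |x - p| = |(x - y) + (y - p)| := by ring_nf
        _ ≤ |x - y| + |y - p| := abs_add_le _ _
        _ = |y - p| + |x - y| := by ring
    have hc' : (0:ℝ) < |g 1 0| := abs_pos.mpr hc
    nlinarith [abs_nonneg (x - y), mul_nonneg (mul_nonneg hc'.le (abs_nonneg (x - y)))
      (sub_nonneg.mpr hsep), mul_le_mul_of_nonneg_left htri hc'.le]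

lemma ud_prod_pos {l : List (Fin (2 * r))} (hl : l ≠ []) (hw : S.IsWord l) :
    ∀ x ∈ S.Ic (l.getLast hl), ∀ y ∈ S.Ic (l.getLast hl),
    0 < ud (S.wordγ l.dropLast) x * ud (S.wordγ l.dropLast) y := by
  intro x hx y hy
  set g := S.wordγ l.dropLast with hg
  have hne := mul_ne_zero (S.ud_ne hl hw x hx) (S.ud_ne hl hw y hy)
  rcases hne.lt_or_gt with hlt | hlt
  · exfalso
    have hcont : ContinuousOn (ud g) (uIcc x y) := by
      apply Continuous.continuousOn
      exact (continuous_const.mul continuous_id).add continuous_const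
    have hmem : (0:ℝ) ∈ uIcc (ud g x) (ud g y) := by
      rcases mul_neg_iff.mp hlt with ⟨h1, h2⟩ | ⟨h1, h2⟩
      · exact Set.mem_uIcc.mpr (Or.inr ⟨h2.le, h1.le⟩)
      · exact Set.mem_uIcc.mpr (Or.inl ⟨h1.le, h2.le⟩)
    obtain ⟨z, hz, hz0⟩ := intermediate_value_uIcc hcont hmem
    have hzI : z ∈ S.Ic (l.getLast hl) := (Set.ordConnected_Icc.uIcc_subset hx hy) hz
    exact S.ud_ne hl hw z hzI hz0
  · exact hlt

lemma mobius_strictMonoOn {l : List (Fin (2 * r))} (hl : l ≠ []) (hw : S.IsWord l) :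
    StrictMonoOn (mobius (S.wordγ l.dropLast)) (S.Ic (l.getLast hl)) := by
  intro x hx y hy hxy
  have hsub := mobius_sub (S.wordγ l.dropLast) x y (S.ud_ne hl hw x hx) (S.ud_ne hl hw y hy)
  have hpos := S.ud_prod_pos hl hw x hx y hy
  have : 0 < (y - x) / (ud (S.wordγ l.dropLast) x * ud (S.wordγ l.dropLast) y) :=
    div_pos (by linarith) hpos
  linarith [hsub]

lemma mobius_contOn {l : List (Fin (2 * r))} (hl : l ≠ []) (hw : S.IsWord l) :
    ContinuousOn (mobius (S.wordγ l.dropLast)) (S.Ic (l.getLast hl)) := by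
  apply ContinuousOn.div
  · exact ((continuous_const.mul continuous_id).add continuous_const).continuousOn
  · exact ((continuous_const.mul continuous_id).add continuous_const).continuousOn
  · exact fun x hx => S.ud_ne hl hw x hx

lemma wordI_eq {l : List (Fin (2 * r))} (hl : l ≠ []) (hw : S.IsWord l) :
    S.wordI l = Icc (mobius (S.wordγ l.dropLast) (S.ξ₀ (l.getLast hl)))
      (mobius (S.wordγ l.dropLast) (S.ξ₁ (l.getLast hl))) := by
  rw [SchottkyData.wordI, dif_neg hl]
  have hle := (S.hlt (l.getLast hl)).le
  have h0m : S.ξ₀ (l.getLast hl) ∈ S.Ic (l.getLast hl) := left_mem_Icc.mpr hle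
  have h1m : S.ξ₁ (l.getLast hl) ∈ S.Ic (l.getLast hl) := right_mem_Icc.mpr hle
  apply Subset.antisymm
  · rintro _ ⟨x, hx, rfl⟩
    have hxI : x ∈ S.Ic (l.getLast hl) := hx
    constructor
    · exact (S.mobius_strictMonoOn hl hw).monotoneOn h0m hxI hx.1
    · exact (S.mobius_strictMonoOn hl hw).monotoneOn hxI h1m hx.2
  · exact intermediate_value_Icc hle (S.mobius_contOn hl hw)

lemma ivlen_wordI {l : List (Fin (2 * r))} (hl : l ≠ []) (hw : S.IsWord l) :
    ivlen (S.wordI l) = (S.ξ₁ (l.getLast hl) - S.ξ₀ (l.getLast hl)) /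
      (ud (S.wordγ l.dropLast) (S.ξ₀ (l.getLast hl)) *
       ud (S.wordγ l.dropLast) (S.ξ₁ (l.getLast hl))) := by
  have hle := (S.hlt (l.getLast hl)).le
  have h0m : S.ξ₀ (l.getLast hl) ∈ S.Ic (l.getLast hl) := left_mem_Icc.mpr hle
  have h1m : S.ξ₁ (l.getLast hl) ∈ S.Ic (l.getLast hl) := right_mem_Icc.mpr hle
  have hsub := mobius_sub (S.wordγ l.dropLast) _ _
    (S.ud_ne hl hw _ h0m) (S.ud_ne hl hw _ h1m)
  have hpos := S.ud_prod_pos hl hw _ h0m _ h1m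
  rw [ivlen, S.wordI_eq hl hw, Real.volume_Icc, hsub,
    ENNReal.toReal_ofReal (div_nonneg (by linarith [S.hlt (l.getLast hl)]) hpos.le)]

end SchottkyData

end Aux2
/-- **Distortion estimates for Schottky groups:** there is `C_Γ > 0` depending only on the
Schottky data such that for every nonempty word `𝐚 = a_1…a_n` and `x, y ∈ I_{a_n}`:
(i) `C_Γ⁻¹|I_𝐚| ≤ γ'_{𝐚'}(x) ≤ C_Γ|I_𝐚|`;
(ii) `γ'_{𝐚'}(x)/γ'_{𝐚'}(y) ≤ exp(C_Γ|x−y|)`;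
(iii) for every Borel `I' ⊂ I_{a_n}`, `C_Γ⁻¹|I_𝐚||I'| ≤ |γ_{𝐚'}(I')| ≤ C_Γ|I_𝐚||I'|`. -/
theorem tree_derivative (r : ℕ) (S : SchottkyData r) :
    ∃ C > (0 : ℝ), ∀ (l : List (Fin (2 * r))) (hl : l ≠ []), S.IsWord l →
      (∀ x ∈ Icc (S.ξ₀ (l.getLast hl)) (S.ξ₁ (l.getLast hl)),
        C⁻¹ * ivlen (S.wordI l) ≤ mobiusDeriv (S.wordγ l.dropLast) x ∧
        mobiusDeriv (S.wordγ l.dropLast) x ≤ C * ivlen (S.wordI l)) ∧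
      (∀ x ∈ Icc (S.ξ₀ (l.getLast hl)) (S.ξ₁ (l.getLast hl)),
        ∀ y ∈ Icc (S.ξ₀ (l.getLast hl)) (S.ξ₁ (l.getLast hl)),
        mobiusDeriv (S.wordγ l.dropLast) x / mobiusDeriv (S.wordγ l.dropLast) y ≤
          Real.exp (C * |x - y|)) ∧
      (∀ I' : Set ℝ, I' ⊆ Icc (S.ξ₀ (l.getLast hl)) (S.ξ₁ (l.getLast hl)) →
        MeasurableSet I' →
        C⁻¹ * ivlen (S.wordI l) * (volume I').toReal ≤
            (volume (mobius (S.wordγ l.dropLast) '' I')).toReal ∧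
          (volume (mobius (S.wordγ l.dropLast) '' I')).toReal ≤
            C * ivlen (S.wordI l) * (volume I').toReal) := by
  have hδ := S.δ₀_pos
  have hm := S.mlen_pos
  have hD : 0 < S.Dlen := lt_of_lt_of_le hm S.mlen_le_Dlen
  set K : ℝ := (S.δ₀ + S.Dlen) / S.δ₀ with hK
  have hK1 : 1 ≤ K := by
    rw [hK, le_div_iff₀ hδ]; linarith
  have hK0 : 0 < K := lt_of_lt_of_le one_pos hK1
  set C : ℝ := K ^ 2 * S.Dlen + K ^ 2 / S.mlen + 2 / S.δ₀ + 1 with hC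
  have hC0 : 0 < C := by positivity
  have hCKD : K ^ 2 * S.Dlen ≤ C := by
    have h1 : 0 < K ^ 2 / S.mlen := by positivity
    have h2 : 0 < 2 / S.δ₀ := by positivity
    rw [hC]; linarith
  have hCKm : K ^ 2 / S.mlen ≤ C := by
    have h1 : 0 < K ^ 2 * S.Dlen := by positivity
    have h2 : 0 < 2 / S.δ₀ := by positivity
    rw [hC]; linarith
  have hC2δ : 2 / S.δ₀ ≤ C := by
    have h1 : 0 < K ^ 2 * S.Dlen := by positivity
    have h2 : 0 < K ^ 2 / S.mlen := by positivity
    rw [hC]; linarith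
  refine ⟨C, hC0, ?_⟩
  intro l hl hw
  set a := l.getLast hl with ha
  set g := S.wordγ l.dropLast with hg
  set L : ℝ := S.ξ₁ a - S.ξ₀ a with hL
  have hL0 : 0 < L := by rw [hL]; linarith [S.hlt a]
  have hLm : S.mlen ≤ L := S.mlen_le a
  have hLD : L ≤ S.Dlen := S.le_Dlen a
  have hle := (S.hlt a).le
  have h0m : S.ξ₀ a ∈ S.Ic a := left_mem_Icc.mpr hle
  have h1m : S.ξ₁ a ∈ S.Ic a := right_mem_Icc.mpr hle
  set P : ℝ := ud g (S.ξ₀ a) * ud g (S.ξ₁ a) with hP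
  have hP0 : 0 < P := S.ud_prod_pos hl hw _ h0m _ h1m
  have hE : ivlen (S.wordI l) = L / P := S.ivlen_wordI hl hw
  have hE0 : 0 < ivlen (S.wordI l) := by rw [hE]; positivity
  -- the uniform ratio bound |u(x)| ≤ K |u(y)|
  have hKbound : ∀ x ∈ S.Ic a, ∀ y ∈ S.Ic a, |ud g x| ≤ K * |ud g y| := by
    intro x hx y hy
    have h1 := S.ud_ratio hl hw x hx y hy
    have hxy : |x - y| ≤ S.Dlen := by
      rw [abs_sub_le_iff]
      obtain ⟨hx1, hx2⟩ := hx
      obtain ⟨hy1, hy2⟩ := hy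
      constructor <;> [linarith [S.le_Dlen a]; linarith [S.le_Dlen a]]
    have h2 : |ud g x| * S.δ₀ ≤ |ud g y| * (S.δ₀ + S.Dlen) := by
      nlinarith [abs_nonneg (ud g y)]
    rw [hK, div_mul_eq_mul_div, le_div_iff₀ hδ]
    nlinarith
  have hsq' : ∀ x ∈ S.Ic a, 0 < (ud g x) ^ 2 := by
    intro x hx
    have := S.ud_ne hl hw x hx
    positivity
  -- part (i)
  have hpart1 : ∀ x ∈ S.Ic a,
      C⁻¹ * ivlen (S.wordI l) ≤ mobiusDeriv g x ∧ mobiusDeriv g x ≤ C * ivlen (S.wordI l) := by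
    intro x hx
    have hx2 := hsq' x hx
    have e0 : |ud g (S.ξ₀ a)| * |ud g (S.ξ₁ a)| = P := by
      rw [← abs_mul, abs_of_pos hP0]
    have hub : P ≤ K ^ 2 * (ud g x) ^ 2 := by
      have h1 := hKbound _ h0m x hx
      have h2 := hKbound _ h1m x hx
      calc P = |ud g (S.ξ₀ a)| * |ud g (S.ξ₁ a)| := e0.symm
        _ ≤ (K * |ud g x|) * (K * |ud g x|) :=
            mul_le_mul h1 h2 (abs_nonneg _) (by positivity)
        _ = K ^ 2 * |ud g x| ^ 2 := by ring
        _ = K ^ 2 * (ud g x) ^ 2 := by rw [sq_abs]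
    have hlb : (ud g x) ^ 2 ≤ K ^ 2 * P := by
      have h1 := hKbound x hx _ h0m
      have h2 := hKbound x hx _ h1m
      calc (ud g x) ^ 2 = |ud g x| * |ud g x| := by rw [← sq_abs]; ring
        _ ≤ (K * |ud g (S.ξ₀ a)|) * (K * |ud g (S.ξ₁ a)|) :=
            mul_le_mul h1 h2 (abs_nonneg _) (by positivity)
        _ = K ^ 2 * (|ud g (S.ξ₀ a)| * |ud g (S.ξ₁ a)|) := by ring
        _ = K ^ 2 * P := by rw [e0]
    rw [mobiusDeriv_eq, hE]
    constructor
    · rw [inv_mul_eq_div, div_div, inv_eq_one_div,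
        div_le_div_iff₀ (by positivity) hx2]
      have h1 : L * (ud g x) ^ 2 ≤ L * (K ^ 2 * P) :=
        mul_le_mul_of_nonneg_left hlb hL0.le
      have h2 : L * (K ^ 2 * P) ≤ S.Dlen * (K ^ 2 * P) :=
        mul_le_mul_of_nonneg_right hLD (by positivity)
      have h3 : S.Dlen * (K ^ 2 * P) = (K ^ 2 * S.Dlen) * P := by ring
      have h4 : (K ^ 2 * S.Dlen) * P ≤ C * P := mul_le_mul_of_nonneg_right hCKD hP0.le
      linarith
    · rw [inv_eq_one_div, ← mul_div_assoc, div_le_div_iff₀ hx2 hP0]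
      have h2 : K ^ 2 ≤ C * L := by
        have h3 : K ^ 2 / S.mlen * S.mlen ≤ C * L :=
          mul_le_mul hCKm hLm hm.le hC0.le
        rwa [div_mul_cancel₀ _ hm.ne'] at h3
      have h5 : K ^ 2 * (ud g x) ^ 2 ≤ C * L * (ud g x) ^ 2 :=
        mul_le_mul_of_nonneg_right h2 hx2.le
      linarith
  -- part (ii)
  have hpart2 : ∀ x ∈ S.Ic a, ∀ y ∈ S.Ic a,
      mobiusDeriv g x / mobiusDeriv g y ≤ Real.exp (C * |x - y|) := by
    intro x hx y hy
    have hx2 := hsq' x hx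
    have hy2 := hsq' y hy
    set t : ℝ := |x - y| with ht
    have ht0 : 0 ≤ t := abs_nonneg _
    have h1 : |ud g y| * S.δ₀ ≤ |ud g x| * (S.δ₀ + t) := by
      have := S.ud_ratio hl hw y hy x hx
      rwa [abs_sub_comm y x] at this
    have hsq : (ud g y) ^ 2 * S.δ₀ ^ 2 ≤ (ud g x) ^ 2 * (S.δ₀ + t) ^ 2 := by
      calc (ud g y) ^ 2 * S.δ₀ ^ 2 = (|ud g y| * S.δ₀) ^ 2 := by rw [mul_pow, sq_abs]
        _ ≤ (|ud g x| * (S.δ₀ + t)) ^ 2 :=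
            pow_le_pow_left₀ (mul_nonneg (abs_nonneg _) hδ.le) h1 2
        _ = (ud g x) ^ 2 * (S.δ₀ + t) ^ 2 := by rw [mul_pow, sq_abs]
    have e1 : mobiusDeriv g x / mobiusDeriv g y = (ud g y) ^ 2 / (ud g x) ^ 2 := by
      rw [mobiusDeriv_eq, mobiusDeriv_eq]
      rw [div_eq_div_iff (inv_ne_zero hy2.ne') hx2.ne']
      rw [inv_mul_cancel₀ hx2.ne', mul_inv_cancel₀ hy2.ne']
    rw [e1]
    have h2 : (ud g y) ^ 2 / (ud g x) ^ 2 ≤ ((S.δ₀ + t) / S.δ₀) ^ 2 := by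
      rw [div_pow, div_le_div_iff₀ hx2 (by positivity)]
      linarith [hsq]
    refine le_trans h2 ?_
    have e2 : (S.δ₀ + t) / S.δ₀ = 1 + t / S.δ₀ := by field_simp
    have h3 : (1 : ℝ) + t / S.δ₀ ≤ Real.exp (t / S.δ₀) := by
      have := Real.add_one_le_exp (t / S.δ₀)
      linarith
    have h4 : ((S.δ₀ + t) / S.δ₀) ^ 2 ≤ (Real.exp (t / S.δ₀)) ^ 2 := by
      rw [e2]
      have h5 : (0:ℝ) ≤ 1 + t / S.δ₀ := by positivity
      exact pow_le_pow_left₀ h5 h3 2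
    refine le_trans h4 ?_
    rw [← Real.exp_nat_mul]
    apply Real.exp_le_exp.mpr
    have : t / S.δ₀ * 2 ≤ C * t := by
      rw [div_mul_eq_mul_div, mul_comm t 2, ← div_mul_eq_mul_div]
      exact mul_le_mul_of_nonneg_right hC2δ ht0 |>.trans_eq rfl
    push_cast
    linarith
  refine ⟨hpart1, hpart2, ?_⟩
  -- part (iii)
  intro I' hI' hmeas
  have hinj : InjOn (mobius g) I' := (S.mobius_strictMonoOn hl hw).injOn.mono hI'
  have hder : ∀ x ∈ I', HasFDerivWithinAt (mobius g)
      (ContinuousLinearMap.smulRight (1 : ℝ →L[ℝ] ℝ) (mobiusDeriv g x)) I' x := by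
    intro x hx
    exact (mobius_hasDerivAt g x (S.ud_ne hl hw x (hI' hx))).hasDerivWithinAt.hasFDerivWithinAt
  have himg : volume (mobius g '' I') = ∫⁻ x in I', ENNReal.ofReal |mobiusDeriv g x| := by
    rw [← setLIntegral_one (mobius g '' I'),
      lintegral_image_eq_lintegral_abs_det_fderiv_mul volume hmeas hder hinj (fun _ => 1)]
    simp [ContinuousLinearMap.det_toSpanSingleton]
  have hbound := fun x hx => hpart1 x (hI' hx)
  have hderivpos : ∀ x ∈ I', 0 < mobiusDeriv g x := by
    intro x hx
    rw [mobiusDeriv_eq]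
    exact inv_pos.mpr (hsq' x (hI' hx))
  have hup : volume (mobius g '' I') ≤ ENNReal.ofReal (C * ivlen (S.wordI l)) * volume I' := by
    rw [himg, ← setLIntegral_const I' (ENNReal.ofReal (C * ivlen (S.wordI l)))]
    refine setLIntegral_mono' hmeas (fun x hx => ?_)
    apply ENNReal.ofReal_le_ofReal
    rw [abs_of_pos (hderivpos x hx)]
    exact (hbound x hx).2
  have hlow : ENNReal.ofReal (C⁻¹ * ivlen (S.wordI l)) * volume I' ≤ volume (mobius g '' I') := by
    rw [himg, ← setLIntegral_const I' (ENNReal.ofReal (C⁻¹ * ivlen (S.wordI l)))]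
    refine setLIntegral_mono' hmeas (fun x hx => ?_)
    apply ENNReal.ofReal_le_ofReal
    rw [abs_of_pos (hderivpos x hx)]
    exact (hbound x hx).1
  have hvolfin : volume I' ≠ ⊤ := ((measure_mono hI').trans_lt measure_Icc_lt_top).ne
  have hfin : volume (mobius g '' I') ≠ ⊤ := by
    refine (lt_of_le_of_lt hup ?_).ne
    exact ENNReal.mul_lt_top ENNReal.ofReal_lt_top hvolfin.lt_top
  constructor
  · have := ENNReal.toReal_mono hfin hlow
    rwa [ENNReal.toReal_mul, ENNReal.toReal_ofReal (by positivity)] at this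
  · have := ENNReal.toReal_mono (by
      exact (ENNReal.mul_lt_top ENNReal.ofReal_lt_top hvolfin.lt_top).ne) hup
    rwa [ENNReal.toReal_mul, ENNReal.toReal_ofReal (by positivity)] at this

end
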